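/- Let γ ∈ [0,2) and let b be the γ-anti-tree over (X, m) with counting measure m ≡ 1, intrinsic degree path metric ρ, closed balls B_o(r) := {y : ρ(o,y) ≤ r}, and combinatorial balls A_N := S₀ ∪ … ∪ S_N. Then there exist constants c, C > 0 such that for all r ≥ 0: A_{⌊c · r^{2/(2−γ)}⌋} ⊆ B_o(r) ⊆ A_{⌈C · r^{2/(2−γ)}⌉}. -/

import Mathlib

open scoped BigOperators

/-- Vertex set of the anti-tree with sphere function `s`:
the `k`-th sphere has `s k` elements. -/
def AntiTree (s : ℕ → ℕ) : Type := Σ k : ℕ, Fin (s k)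

namespace AntiTree

/-- Standard edge weights of the anti-tree: consecutive spheres are completely connected,
and there are no other edges. -/
def wt (s : ℕ → ℕ) (x y : AntiTree s) : ℝ :=
  if x.1 + 1 = y.1 ∨ y.1 + 1 = x.1 then 1 else 0

/-- Weighted vertex degree with respect to the counting measure `m ≡ 1`. -/
noncomputable def Deg (s : ℕ → ℕ) (x : AntiTree s) : ℝ := ∑' y : AntiTree s, wt s x y

end AntiTree

/-- Intrinsic degree path (pseudo-)metric of a weighted graph `b` whose weighted degree
function is `D`:  `ρ(x,y)` is the infimum over finite paths from `x` to `y` of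
`∑_j min(1/D(x_j), 1/D(x_{j+1}))^{1/2}`. -/
noncomputable def pathMetric {X : Type*} (b : X → X → ℝ) (D : X → ℝ) (x y : X) : ℝ :=
  sInf { L : ℝ | ∃ (k : ℕ) (p : ℕ → X), p 0 = x ∧ p k = y ∧
    (∀ j < k, 0 < b (p j) (p (j + 1))) ∧
    L = ∑ j ∈ Finset.range k, Real.sqrt (min (1 / D (p j)) (1 / D (p (j + 1)))) }

/-- The intrinsic degree path metric of the anti-tree. -/
noncomputable def AntiTree.rho (s : ℕ → ℕ) : AntiTree s → AntiTree s → ℝ :=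
  pathMetric (AntiTree.wt s) (AntiTree.Deg s)

/-- Closed balls with respect to the intrinsic degree path metric. -/
noncomputable def AntiTree.ball (s : ℕ → ℕ) (x : AntiTree s) (r : ℝ) : Set (AntiTree s) :=
  {y | AntiTree.rho s x y ≤ r}

/-- The sphere function of the `γ`-anti-tree: `s (k-1) = ⌊k ^ γ⌋` for `k ≥ 1`,
i.e. `s k = ⌊(k+1) ^ γ⌋`. -/
noncomputable def gammaSphere (γ : ℝ) : ℕ → ℕ := fun k => ⌊((k : ℝ) + 1) ^ γ⌋₊


section ATaux

/-- Tangent-line inequality for concave rpow, from Bernoulli. -/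
private lemma AT_tangent {β : ℝ} (hβ0 : 0 ≤ β) (hβ1 : β ≤ 1) {a x : ℝ} (ha : 0 < a)
    (hx : 0 ≤ x) : x ^ β ≤ a ^ β + β * a ^ (β - 1) * (x - a) := by
  have hxa : 0 ≤ x / a := div_nonneg hx ha.le
  have hs : (-1 : ℝ) ≤ x / a - 1 := by linarith
  have hb := rpow_one_add_le_one_add_mul_self hs hβ0 hβ1
  rw [show (1 : ℝ) + (x / a - 1) = x / a by ring] at hb
  have h1 : x ^ β = a ^ β * (x / a) ^ β := by
    rw [← Real.mul_rpow ha.le hxa, mul_div_cancel₀ _ ha.ne']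
  have h2 : a ^ β * (x / a) ^ β ≤ a ^ β * (1 + β * (x / a - 1)) :=
    mul_le_mul_of_nonneg_left hb (Real.rpow_nonneg ha.le β)
  have h3 : a ^ β * (1 + β * (x / a - 1)) = a ^ β + β * a ^ (β - 1) * (x - a) := by
    rw [Real.rpow_sub ha, Real.rpow_one]
    field_simp
  rw [h1, ← h3]
  exact h2

private lemma AT_sum_le {γ : ℝ} (hγ0 : 0 ≤ γ) (hγ2 : γ < 2) (N : ℕ) :
    ∑ j ∈ Finset.range N, ((j : ℝ) + 2) ^ (-(γ / 2)) ≤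
      ((N : ℝ) + 1) ^ (1 - γ / 2) / (1 - γ / 2) := by
  set β : ℝ := 1 - γ / 2 with hβdef
  have hβpos : 0 < β := by rw [hβdef]; linarith
  have hβ1 : β ≤ 1 := by rw [hβdef]; linarith
  have hexp : -(γ / 2) = β - 1 := by rw [hβdef]; ring
  have key : ∀ j : ℕ, ((j : ℝ) + 2) ^ (-(γ / 2)) * β ≤ ((j : ℝ) + 2) ^ β - ((j : ℝ) + 1) ^ β := by
    intro j
    have := AT_tangent hβpos.le hβ1 (a := (j : ℝ) + 2) (x := (j : ℝ) + 1)
      (by positivity) (by positivity)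
    rw [hexp]
    nlinarith [this]
  have htel : ∑ j ∈ Finset.range N, (((j : ℝ) + 2) ^ β - ((j : ℝ) + 1) ^ β)
      = ((N : ℝ) + 1) ^ β - 1 := by
    have h := Finset.sum_range_sub (f := fun j : ℕ => ((j : ℝ) + 1) ^ β) N
    have h2 : ∀ j ∈ Finset.range N,
        (((j : ℝ) + 2) ^ β - ((j : ℝ) + 1) ^ β)
          = (fun j : ℕ => ((j : ℝ) + 1) ^ β) (j + 1) - (fun j : ℕ => ((j : ℝ) + 1) ^ β) j := by
      intro j _
      push_cast
      ring_nf
    rw [Finset.sum_congr rfl h2, h]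
    norm_num
  have hsum : (∑ j ∈ Finset.range N, ((j : ℝ) + 2) ^ (-(γ / 2))) * β ≤ ((N : ℝ) + 1) ^ β := by
    rw [Finset.sum_mul]
    calc ∑ j ∈ Finset.range N, ((j : ℝ) + 2) ^ (-(γ / 2)) * β
        ≤ ∑ j ∈ Finset.range N, (((j : ℝ) + 2) ^ β - ((j : ℝ) + 1) ^ β) :=
          Finset.sum_le_sum fun j _ => key j
      _ = ((N : ℝ) + 1) ^ β - 1 := htel
      _ ≤ ((N : ℝ) + 1) ^ β := by linarith
  rw [le_div_iff₀ hβpos]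
  exact hsum

private lemma AT_sum_ge {γ : ℝ} (hγ0 : 0 ≤ γ) (hγ2 : γ < 2) (N : ℕ) (hN : 1 ≤ N) :
    (N : ℝ) ^ (1 - γ / 2) / 4 ≤ ∑ j ∈ Finset.range N, ((j : ℝ) + 3) ^ (-(γ / 2)) := by
  set β : ℝ := 1 - γ / 2 with hβdef
  have hβpos : 0 < β := by rw [hβdef]; linarith
  have hβ1 : β ≤ 1 := by rw [hβdef]; linarith
  have hexp : -(γ / 2) = β - 1 := by rw [hβdef]; ring
  have hN1 : (1 : ℝ) ≤ (N : ℝ) := by exact_mod_cast hN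
  have key : ∀ j : ℕ, ((j : ℝ) + 4) ^ β - ((j : ℝ) + 3) ^ β ≤ β * ((j : ℝ) + 3) ^ (-(γ / 2)) := by
    intro j
    have := AT_tangent hβpos.le hβ1 (a := (j : ℝ) + 3) (x := (j : ℝ) + 4)
      (by positivity) (by positivity)
    rw [hexp]
    nlinarith [this]
  have htel : ∑ j ∈ Finset.range N, (((j : ℝ) + 4) ^ β - ((j : ℝ) + 3) ^ β)
      = ((N : ℝ) + 3) ^ β - 3 ^ β := by
    have h := Finset.sum_range_sub (f := fun j : ℕ => ((j : ℝ) + 3) ^ β) N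
    have h2 : ∀ j ∈ Finset.range N,
        (((j : ℝ) + 4) ^ β - ((j : ℝ) + 3) ^ β)
          = (fun j : ℕ => ((j : ℝ) + 3) ^ β) (j + 1) - (fun j : ℕ => ((j : ℝ) + 3) ^ β) j := by
      intro j _
      push_cast
      ring_nf
    rw [Finset.sum_congr rfl h2, h]
    norm_num
  have hmain : ((N : ℝ) + 3) ^ β - 3 ^ β ≥ β * ((N : ℝ) * ((N : ℝ) + 3) ^ (β - 1)) := by
    have := AT_tangent hβpos.le hβ1 (a := (N : ℝ) + 3) (x := (3 : ℝ))
      (by positivity) (by norm_num)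
    nlinarith [this]
  have hbase : ((4 : ℝ) * (N : ℝ)) ^ (β - 1) ≤ ((N : ℝ) + 3) ^ (β - 1) :=
    Real.rpow_le_rpow_of_nonpos (by positivity) (by linarith) (by linarith)
  have hsplit : ((4 : ℝ) * (N : ℝ)) ^ (β - 1) = (4 : ℝ) ^ (β - 1) * (N : ℝ) ^ (β - 1) :=
    Real.mul_rpow (by norm_num) (by positivity)
  have h4 : (1 : ℝ) / 4 ≤ (4 : ℝ) ^ (β - 1) := by
    have : (4 : ℝ) ^ (-1 : ℝ) ≤ (4 : ℝ) ^ (β - 1) :=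
      Real.rpow_le_rpow_of_exponent_le (by norm_num) (by linarith)
    rw [Real.rpow_neg_one] at this
    linarith
  have hNpow : (N : ℝ) ^ (β - 1) * (N : ℝ) = (N : ℝ) ^ β := by
    nth_rewrite 2 [show (N : ℝ) = (N : ℝ) ^ (1 : ℝ) from (Real.rpow_one _).symm]
    rw [← Real.rpow_add (by linarith)]
    norm_num
  have hNnn : (0 : ℝ) ≤ (N : ℝ) ^ (β - 1) := Real.rpow_nonneg (by positivity) _
  have hchain : β * ((N : ℝ) ^ β / 4) ≤ β * ((N : ℝ) * ((N : ℝ) + 3) ^ (β - 1)) := by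
    apply mul_le_mul_of_nonneg_left _ hβpos.le
    calc (N : ℝ) ^ β / 4 = (N : ℝ) * (1 / 4 * (N : ℝ) ^ (β - 1)) := by
          rw [← hNpow]; ring
      _ ≤ (N : ℝ) * ((4 : ℝ) ^ (β - 1) * (N : ℝ) ^ (β - 1)) := by
          apply mul_le_mul_of_nonneg_left _ (by positivity)
          exact mul_le_mul_of_nonneg_right h4 hNnn
      _ = (N : ℝ) * ((4 : ℝ) * (N : ℝ)) ^ (β - 1) := by rw [hsplit]
      _ ≤ (N : ℝ) * ((N : ℝ) + 3) ^ (β - 1) :=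
          mul_le_mul_of_nonneg_left hbase (by positivity)
  have hsum : β * ((N : ℝ) ^ β / 4) ≤ β * ∑ j ∈ Finset.range N, ((j : ℝ) + 3) ^ (-(γ / 2)) := by
    calc β * ((N : ℝ) ^ β / 4) ≤ β * ((N : ℝ) * ((N : ℝ) + 3) ^ (β - 1)) := hchain
      _ ≤ ((N : ℝ) + 3) ^ β - 3 ^ β := hmain
      _ = ∑ j ∈ Finset.range N, (((j : ℝ) + 4) ^ β - ((j : ℝ) + 3) ^ β) := htel.symm
      _ ≤ ∑ j ∈ Finset.range N, β * ((j : ℝ) + 3) ^ (-(γ / 2)) :=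
          Finset.sum_le_sum fun j _ => key j
      _ = β * ∑ j ∈ Finset.range N, ((j : ℝ) + 3) ^ (-(γ / 2)) := (Finset.mul_sum _ _ _).symm
  exact le_of_mul_le_mul_left hsum hβpos

private lemma AT_sqrt_inv_two_mul {γ t : ℝ} (ht : 0 < t) :
    Real.sqrt (1 / (2 * t ^ γ)) = (Real.sqrt 2)⁻¹ * t ^ (-(γ / 2)) := by
  have h1 : Real.sqrt (t ^ γ) = t ^ (γ / 2) := by
    rw [Real.sqrt_eq_rpow, ← Real.rpow_mul ht.le]
    congr 1
    ring
  rw [one_div, mul_inv, Real.sqrt_mul (by positivity : (0:ℝ) ≤ (2:ℝ)⁻¹), Real.sqrt_inv,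
    Real.sqrt_inv, h1, ← Real.rpow_neg ht.le]

private lemma AT_sqrt_two_div {γ t : ℝ} (ht : 0 < t) :
    Real.sqrt (2 / t ^ γ) = Real.sqrt 2 * t ^ (-(γ / 2)) := by
  have h1 : Real.sqrt (t ^ γ) = t ^ (γ / 2) := by
    rw [Real.sqrt_eq_rpow, ← Real.rpow_mul ht.le]
    congr 1
    ring
  rw [div_eq_mul_inv, Real.sqrt_mul (by norm_num : (0:ℝ) ≤ 2), Real.sqrt_inv, h1,
    ← Real.rpow_neg ht.le]

end ATaux

section ATgraph

private def ATemb (s : ℕ → ℕ) (n : ℕ) : Fin (s n) ↪ AntiTree s where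
  toFun i := ⟨n, i⟩
  inj' := fun a b h => by
    have h' : (⟨n, a⟩ : Σ k : ℕ, Fin (s k)) = ⟨n, b⟩ := h
    exact @sigma_mk_injective ℕ (fun k => Fin (s k)) n _ _ h'

private lemma ATemb_apply (s : ℕ → ℕ) (n : ℕ) (i : Fin (s n)) :
    ATemb s n i = (⟨n, i⟩ : AntiTree s) := rfl

private lemma AT_deg_eq (s : ℕ → ℕ) (x : AntiTree s) :
    AntiTree.Deg s x = (s (x.1 + 1) : ℝ) + (if x.1 = 0 then 0 else (s (x.1 - 1) : ℝ)) := by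
  classical
  obtain ⟨k, i⟩ := x
  rcases Nat.eq_zero_or_pos k with rfl | hk
  · -- k = 0
    have h0 : ∀ y ∉ Finset.univ.map (ATemb s 1), AntiTree.wt s ⟨0, i⟩ y = 0 := by
      rintro ⟨n, j⟩ hy
      unfold AntiTree.wt; rw [if_neg]
      rintro (h | h)
      · have h' : 0 + 1 = n := h
        obtain rfl : n = 1 := by omega
        exact hy (Finset.mem_map.mpr ⟨j, Finset.mem_univ j, rfl⟩)
      · have h' : n + 1 = 0 := h
        omega
    have h1 : ∀ y ∈ Finset.univ.map (ATemb s 1), AntiTree.wt s ⟨0, i⟩ y = 1 := by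
      rintro ⟨n, j⟩ hy
      obtain ⟨a, _, ha⟩ := Finset.mem_map.mp hy
      rw [ATemb_apply] at ha
      cases ha
      unfold AntiTree.wt; rw [if_pos]
      exact Or.inl rfl
    unfold AntiTree.Deg; rw [tsum_eq_sum h0, Finset.sum_congr rfl h1]
    simp
  · -- k ≥ 1
    have hdisj : Disjoint (Finset.univ.map (ATemb s (k + 1)))
        (Finset.univ.map (ATemb s (k - 1))) := by
      rw [Finset.disjoint_left]
      rintro ⟨n, j⟩ ha hb
      obtain ⟨a, _, ha⟩ := Finset.mem_map.mp ha
      obtain ⟨b, _, hb⟩ := Finset.mem_map.mp hb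
      rw [ATemb_apply] at ha hb
      have h1 : k + 1 = n := congrArg Sigma.fst ha
      have h2 : k - 1 = n := congrArg Sigma.fst hb
      omega
    set F := Finset.univ.map (ATemb s (k + 1)) ∪ Finset.univ.map (ATemb s (k - 1)) with hF
    have h0 : ∀ y ∉ F, AntiTree.wt s ⟨k, i⟩ y = 0 := by
      rintro ⟨n, j⟩ hy
      unfold AntiTree.wt; rw [if_neg]
      rintro (h | h)
      · have h' : k + 1 = n := h
        subst h'
        exact hy (Finset.mem_union.mpr (Or.inl
          (Finset.mem_map.mpr ⟨j, Finset.mem_univ j, rfl⟩)))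
      · have h' : n + 1 = k := h
        obtain rfl : n = k - 1 := by omega
        exact hy (Finset.mem_union.mpr (Or.inr
          (Finset.mem_map.mpr ⟨j, Finset.mem_univ j, rfl⟩)))
    have h1 : ∀ y ∈ F, AntiTree.wt s ⟨k, i⟩ y = 1 := by
      rintro ⟨n, j⟩ hy
      unfold AntiTree.wt; rw [if_pos]
      rcases Finset.mem_union.mp hy with hm | hm
      · obtain ⟨a, _, ha⟩ := Finset.mem_map.mp hm
        rw [ATemb_apply] at ha
        cases ha
        exact Or.inl rfl
      · obtain ⟨a, _, ha⟩ := Finset.mem_map.mp hm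
        rw [ATemb_apply] at ha
        cases ha
        exact Or.inr (show (k - 1) + 1 = k by omega)
    unfold AntiTree.Deg; rw [tsum_eq_sum h0, Finset.sum_congr rfl h1, Finset.sum_const,
      Finset.card_union_of_disjoint hdisj]
    simp [Nat.pos_iff_ne_zero.mp hk]

private lemma AT_gs_pos {γ : ℝ} (hγ0 : 0 ≤ γ) (k : ℕ) : 0 < gammaSphere γ k := by
  rw [gammaSphere]
  apply Nat.floor_pos.mpr
  calc (1 : ℝ) = ((k : ℝ) + 1) ^ (0 : ℝ) := (Real.rpow_zero _).symm
    _ ≤ ((k : ℝ) + 1) ^ γ := Real.rpow_le_rpow_of_exponent_le (by have : (0:ℝ) ≤ (k:ℝ) := Nat.cast_nonneg k; linarith) hγ0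

private lemma AT_gs_le {γ : ℝ} (k : ℕ) : (gammaSphere γ k : ℝ) ≤ ((k : ℝ) + 1) ^ γ := by
  rw [gammaSphere]
  exact Nat.floor_le (Real.rpow_nonneg (by positivity) γ)

private lemma AT_gs_ge {γ : ℝ} (hγ0 : 0 ≤ γ) (k : ℕ) :
    ((k : ℝ) + 1) ^ γ / 2 ≤ (gammaSphere γ k : ℝ) := by
  have h1 : (1 : ℝ) ≤ ((k : ℝ) + 1) ^ γ := by
    calc (1 : ℝ) = ((k : ℝ) + 1) ^ (0 : ℝ) := (Real.rpow_zero _).symm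
      _ ≤ ((k : ℝ) + 1) ^ γ := Real.rpow_le_rpow_of_exponent_le (by have : (0:ℝ) ≤ (k:ℝ) := Nat.cast_nonneg k; linarith) hγ0
  have h2 : ((k : ℝ) + 1) ^ γ - 1 < (gammaSphere γ k : ℝ) := by
    rw [gammaSphere]
    exact Nat.sub_one_lt_floor _
  have h3 : (1 : ℝ) ≤ (gammaSphere γ k : ℝ) := by
    exact_mod_cast AT_gs_pos hγ0 k
  rcases le_or_gt (((k : ℝ) + 1) ^ γ) 2 with h | h
  · linarith
  · linarith

private lemma AT_gs_mono {γ : ℝ} (hγ0 : 0 ≤ γ) : Monotone (gammaSphere γ) := by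
  intro a b h
  rw [gammaSphere, gammaSphere]
  apply Nat.floor_mono
  apply Real.rpow_le_rpow (by positivity) _ hγ0
  have : (a : ℝ) ≤ (b : ℝ) := by exact_mod_cast h
  linarith

private lemma AT_deg_le {γ : ℝ} (hγ0 : 0 ≤ γ) (x : AntiTree (gammaSphere γ)) :
    AntiTree.Deg (gammaSphere γ) x ≤ 2 * ((x.1 : ℝ) + 2) ^ γ := by
  rw [AT_deg_eq]
  have h1 : (gammaSphere γ (x.1 + 1) : ℝ) ≤ ((x.1 : ℝ) + 2) ^ γ := by
    have := AT_gs_le (γ := γ) (x.1 + 1)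
    push_cast at this
    calc (gammaSphere γ (x.1 + 1) : ℝ) ≤ ((x.1 : ℝ) + 1 + 1) ^ γ := this
      _ = ((x.1 : ℝ) + 2) ^ γ := by ring_nf
  have h2 : (if x.1 = 0 then (0:ℝ) else (gammaSphere γ (x.1 - 1) : ℝ)) ≤ ((x.1 : ℝ) + 2) ^ γ := by
    split_ifs with h
    · positivity
    · calc (gammaSphere γ (x.1 - 1) : ℝ) ≤ (gammaSphere γ (x.1 + 1) : ℝ) := by
            exact_mod_cast AT_gs_mono hγ0 (by omega : x.1 - 1 ≤ x.1 + 1)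
        _ ≤ ((x.1 : ℝ) + 2) ^ γ := h1
  linarith

private lemma AT_deg_ge {γ : ℝ} (hγ0 : 0 ≤ γ) (x : AntiTree (gammaSphere γ)) :
    ((x.1 : ℝ) + 2) ^ γ / 2 ≤ AntiTree.Deg (gammaSphere γ) x := by
  rw [AT_deg_eq]
  have h1 := AT_gs_ge hγ0 (x.1 + 1)
  push_cast at h1
  have h2 : (0:ℝ) ≤ (if x.1 = 0 then (0:ℝ) else (gammaSphere γ (x.1 - 1) : ℝ)) := by
    split_ifs <;> positivity
  have h3 : ((x.1 : ℝ) + 1 + 1) ^ γ = ((x.1 : ℝ) + 2) ^ γ := by ring_nf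
  linarith [h1, h2, h3.symm.le]

private lemma AT_deg_pos {γ : ℝ} (hγ0 : 0 ≤ γ) (x : AntiTree (gammaSphere γ)) :
    0 < AntiTree.Deg (gammaSphere γ) x :=
  lt_of_lt_of_le (by positivity) (AT_deg_ge hγ0 x)

end ATgraph

section ATmetric

private def ATset {X : Type*} (b : X → X → ℝ) (D : X → ℝ) (x y : X) : Set ℝ :=
  { L : ℝ | ∃ (k : ℕ) (p : ℕ → X), p 0 = x ∧ p k = y ∧
    (∀ j < k, 0 < b (p j) (p (j + 1))) ∧
    L = ∑ j ∈ Finset.range k, Real.sqrt (min (1 / D (p j)) (1 / D (p (j + 1)))) }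

private lemma AT_rho_def (s : ℕ → ℕ) (x y : AntiTree s) :
    AntiTree.rho s x y = sInf (ATset (AntiTree.wt s) (AntiTree.Deg s) x y) := rfl

private lemma ATset_nonneg {X : Type*} (b : X → X → ℝ) (D : X → ℝ) (x y : X) :
    ∀ L ∈ ATset b D x y, 0 ≤ L := by
  rintro L ⟨k, p, _, _, _, rfl⟩
  exact Finset.sum_nonneg fun j _ => Real.sqrt_nonneg _

private lemma ATset_bddBelow {X : Type*} (b : X → X → ℝ) (D : X → ℝ) (x y : X) :
    BddBelow (ATset b D x y) :=
  ⟨0, fun L hL => ATset_nonneg b D x y L hL⟩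

/-- One-step lower bound for the intrinsic path length. -/
private lemma AT_step_ge {γ : ℝ} (hγ0 : 0 ≤ γ) {x y : AntiTree (gammaSphere γ)}
    (h : x.1 + 1 = y.1) :
    (Real.sqrt 2)⁻¹ * ((x.1 : ℝ) + 3) ^ (-(γ / 2)) ≤
      Real.sqrt (min (1 / AntiTree.Deg (gammaSphere γ) x)
        (1 / AntiTree.Deg (gammaSphere γ) y)) := by
  have ht : (0 : ℝ) < (x.1 : ℝ) + 3 := by positivity
  have hxp : 0 < AntiTree.Deg (gammaSphere γ) x := AT_deg_pos hγ0 x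
  have hyp : 0 < AntiTree.Deg (gammaSphere γ) y := AT_deg_pos hγ0 y
  have hrp : (0 : ℝ) < ((x.1 : ℝ) + 3) ^ γ := by positivity
  have hxle : AntiTree.Deg (gammaSphere γ) x ≤ 2 * ((x.1 : ℝ) + 3) ^ γ := by
    refine (AT_deg_le hγ0 x).trans ?_
    have : ((x.1 : ℝ) + 2) ^ γ ≤ ((x.1 : ℝ) + 3) ^ γ :=
      Real.rpow_le_rpow (by positivity) (by linarith) hγ0
    linarith
  have hyle : AntiTree.Deg (gammaSphere γ) y ≤ 2 * ((x.1 : ℝ) + 3) ^ γ := by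
    refine (AT_deg_le hγ0 y).trans ?_
    have hy1 : (y.1 : ℝ) = (x.1 : ℝ) + 1 := by
      rw [← h]; push_cast; ring
    rw [hy1]
    have : ((x.1 : ℝ) + 1 + 2) ^ γ = ((x.1 : ℝ) + 3) ^ γ := by ring_nf
    linarith [this.le]
  have h1 : 1 / (2 * ((x.1 : ℝ) + 3) ^ γ) ≤ 1 / AntiTree.Deg (gammaSphere γ) x :=
    one_div_le_one_div_of_le hxp hxle
  have h2 : 1 / (2 * ((x.1 : ℝ) + 3) ^ γ) ≤ 1 / AntiTree.Deg (gammaSphere γ) y :=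
    one_div_le_one_div_of_le hyp hyle
  calc (Real.sqrt 2)⁻¹ * ((x.1 : ℝ) + 3) ^ (-(γ / 2))
      = Real.sqrt (1 / (2 * ((x.1 : ℝ) + 3) ^ γ)) := (AT_sqrt_inv_two_mul ht).symm
    _ ≤ _ := Real.sqrt_le_sqrt (le_min h1 h2)

private noncomputable def ATG (γ : ℝ) (n : ℕ) : ℝ :=
  ∑ m ∈ Finset.range n, (Real.sqrt 2)⁻¹ * ((m : ℝ) + 3) ^ (-(γ / 2))

private lemma ATG_succ (γ : ℝ) (n : ℕ) :
    ATG γ (n + 1) = ATG γ n + (Real.sqrt 2)⁻¹ * ((n : ℝ) + 3) ^ (-(γ / 2)) :=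
  Finset.sum_range_succ _ n

private lemma ATG_term_nonneg (γ : ℝ) (n : ℕ) :
    0 ≤ (Real.sqrt 2)⁻¹ * ((n : ℝ) + 3) ^ (-(γ / 2)) := by positivity

/-- Lower bound on the length of any admissible path. -/
private lemma AT_path_ge {γ : ℝ} (hγ0 : 0 ≤ γ) (k : ℕ) (p : ℕ → AntiTree (gammaSphere γ))
    (hadj : ∀ j < k, 0 < AntiTree.wt (gammaSphere γ) (p j) (p (j + 1))) :
    ATG γ (p k).1 - ATG γ (p 0).1 ≤
      ∑ j ∈ Finset.range k, Real.sqrt (min (1 / AntiTree.Deg (gammaSphere γ) (p j))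
        (1 / AntiTree.Deg (gammaSphere γ) (p (j + 1)))) := by
  have hterm : ∀ j < k, |ATG γ (p (j + 1)).1 - ATG γ (p j).1| ≤
      Real.sqrt (min (1 / AntiTree.Deg (gammaSphere γ) (p j))
        (1 / AntiTree.Deg (gammaSphere γ) (p (j + 1)))) := by
    intro j hj
    have h := hadj j hj
    rw [AntiTree.wt] at h
    split_ifs at h with hc
    · rcases hc with hc | hc
      · rw [← hc, ATG_succ, add_sub_cancel_left, abs_of_nonneg (ATG_term_nonneg γ _)]
        exact AT_step_ge hγ0 hc
      · rw [← hc, ATG_succ]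
        rw [show ATG γ (p (j + 1)).1 - (ATG γ (p (j + 1)).1 +
          (Real.sqrt 2)⁻¹ * (((p (j + 1)).1 : ℝ) + 3) ^ (-(γ / 2))) =
          -((Real.sqrt 2)⁻¹ * (((p (j + 1)).1 : ℝ) + 3) ^ (-(γ / 2))) by ring,
          abs_neg, abs_of_nonneg (ATG_term_nonneg γ _)]
        rw [min_comm]
        exact AT_step_ge hγ0 hc
    · exact absurd h (lt_irrefl 0)
  calc ATG γ (p k).1 - ATG γ (p 0).1
      = ∑ j ∈ Finset.range k, (ATG γ (p (j + 1)).1 - ATG γ (p j).1) :=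
        (Finset.sum_range_sub (fun j => ATG γ (p j).1) k).symm
    _ ≤ |∑ j ∈ Finset.range k, (ATG γ (p (j + 1)).1 - ATG γ (p j).1)| := le_abs_self _
    _ ≤ ∑ j ∈ Finset.range k, |ATG γ (p (j + 1)).1 - ATG γ (p j).1| :=
        Finset.abs_sum_le_sum_abs _ _
    _ ≤ _ := Finset.sum_le_sum fun j hj => hterm j (Finset.mem_range.mp hj)

private lemma AT_root_unique {γ : ℝ} (o z : AntiTree (gammaSphere γ)) (ho : o.1 = 0)
    (hz : z.1 = 0) : z = o := by
  have hs0 : gammaSphere γ 0 = 1 := by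
    rw [gammaSphere]
    norm_num
  obtain ⟨a, ia⟩ := z
  obtain ⟨b, ib⟩ := o
  simp only at hz ho
  subst hz; subst ho
  have hia := ia.isLt
  have hib := ib.isLt
  have : ia = ib := Fin.ext (by omega)
  rw [this]

/-- The straight path: membership and upper estimate. -/
private lemma AT_straight {γ : ℝ} (hγ0 : 0 ≤ γ) (o x : AntiTree (gammaSphere γ))
    (ho : o.1 = 0) :
    ∃ L ∈ ATset (AntiTree.wt (gammaSphere γ)) (AntiTree.Deg (gammaSphere γ)) o x,
      L ≤ ∑ j ∈ Finset.range x.1, Real.sqrt 2 * ((j : ℝ) + 2) ^ (-(γ / 2)) := by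
  classical
  set N := x.1 with hN
  set p : ℕ → AntiTree (gammaSphere γ) :=
    fun j => if j < N then ⟨j, ⟨0, AT_gs_pos hγ0 j⟩⟩ else x with hp
  have hlev : ∀ j ≤ N, (p j).1 = j := by
    intro j hj
    by_cases h : j < N
    · simp [hp, h]
    · have : j = N := by omega
      simp [hp, h, this, hN]
  have hp0 : p 0 = o := by
    apply AT_root_unique o _ ho
    exact hlev 0 (Nat.zero_le _)
  have hpN : p N = x := by simp [hp]
  have hadjp : ∀ j < N, 0 < AntiTree.wt (gammaSphere γ) (p j) (p (j + 1)) := by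
    intro j hj
    rw [AntiTree.wt, if_pos]
    · norm_num
    · left
      rw [hlev j hj.le, hlev (j + 1) hj]
  refine ⟨_, ⟨N, p, hp0, hpN, hadjp, rfl⟩, ?_⟩
  apply Finset.sum_le_sum
  intro j hj
  have hj' : j < N := Finset.mem_range.mp hj
  have hdp : 0 < AntiTree.Deg (gammaSphere γ) (p j) := AT_deg_pos hγ0 (p j)
  have hjl : ((p j).1 : ℝ) = (j : ℝ) := by rw [hlev j hj'.le]
  have hge : ((j : ℝ) + 2) ^ γ / 2 ≤ AntiTree.Deg (gammaSphere γ) (p j) := by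
    have := AT_deg_ge hγ0 (p j)
    rwa [hjl] at this
  have hpos2 : (0 : ℝ) < ((j : ℝ) + 2) ^ γ / 2 := by positivity
  have h1 : 1 / AntiTree.Deg (gammaSphere γ) (p j) ≤ 2 / ((j : ℝ) + 2) ^ γ := by
    have := one_div_le_one_div_of_le hpos2 hge
    rwa [one_div_div] at this
  calc Real.sqrt (min (1 / AntiTree.Deg (gammaSphere γ) (p j))
        (1 / AntiTree.Deg (gammaSphere γ) (p (j + 1))))
      ≤ Real.sqrt (2 / ((j : ℝ) + 2) ^ γ) :=
        Real.sqrt_le_sqrt ((min_le_left _ _).trans h1)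
    _ = Real.sqrt 2 * ((j : ℝ) + 2) ^ (-(γ / 2)) := AT_sqrt_two_div (by positivity)

private lemma AT_rho_le {γ : ℝ} (hγ0 : 0 ≤ γ) (o x : AntiTree (gammaSphere γ))
    (ho : o.1 = 0) :
    AntiTree.rho (gammaSphere γ) o x ≤
      ∑ j ∈ Finset.range x.1, Real.sqrt 2 * ((j : ℝ) + 2) ^ (-(γ / 2)) := by
  obtain ⟨L, hL, hLle⟩ := AT_straight hγ0 o x ho
  rw [AT_rho_def]
  exact le_trans (csInf_le (ATset_bddBelow _ _ _ _) hL) hLle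

private lemma AT_rho_ge {γ : ℝ} (hγ0 : 0 ≤ γ) (o x : AntiTree (gammaSphere γ))
    (ho : o.1 = 0) :
    ATG γ x.1 ≤ AntiTree.rho (gammaSphere γ) o x := by
  rw [AT_rho_def]
  apply le_csInf
  · obtain ⟨L, hL, _⟩ := AT_straight hγ0 o x ho
    exact ⟨L, hL⟩
  · rintro L ⟨k, q, hq0, hqk, hadj, rfl⟩
    have h := AT_path_ge hγ0 k q hadj
    rw [hq0, hqk, ho] at h
    have hG0 : ATG γ 0 = 0 := by simp [ATG]
    rw [hG0] at h
    linarith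

end ATmetric

/-- **Intrinsic balls versus combinatorial balls in anti-trees.**
For `γ ∈ [0,2)` and the `γ`-anti-tree with root `o`, intrinsic degree path metric `ρ` and
combinatorial balls `A_N = S₀ ∪ … ∪ S_N`, there are constants `c, C > 0` such that for all
`r ≥ 0`:  `A_{⌊c r^{2/(2-γ)}⌋} ⊆ B_o(r) ⊆ A_{⌈C r^{2/(2-γ)}⌉}`. -/
theorem gammaAntiTree_ball_comparison (γ : ℝ) (hγ0 : 0 ≤ γ) (hγ2 : γ < 2)
    (o : AntiTree (gammaSphere γ)) (ho : o.1 = 0) :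
    ∃ c C : ℝ, 0 < c ∧ 0 < C ∧ ∀ r : ℝ, 0 ≤ r →
      {x : AntiTree (gammaSphere γ) | x.1 ≤ ⌊c * r ^ (2 / (2 - γ))⌋₊} ⊆
          AntiTree.ball (gammaSphere γ) o r ∧
      AntiTree.ball (gammaSphere γ) o r ⊆
          {x : AntiTree (gammaSphere γ) | x.1 ≤ ⌈C * r ^ (2 / (2 - γ))⌉₊} := by
  have hβpos : (0:ℝ) < 1 - γ / 2 := by linarith
  set β : ℝ := 1 - γ / 2 with hβdef
  have hβne : β ≠ 0 := ne_of_gt hβpos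
  have hβ1 : β ≤ 1 := by rw [hβdef]; linarith
  have hs2 : (0:ℝ) < Real.sqrt 2 := Real.sqrt_pos.mpr (by norm_num)
  have hexp : 2 / (2 - γ) = 1 / β := by
    rw [hβdef, div_eq_div_iff (by linarith) (by positivity)]
    ring
  have hc0 : 0 < β / (2 * Real.sqrt 2) := by positivity
  set c : ℝ := (β / (2 * Real.sqrt 2)) ^ (1 / β : ℝ) with hcdef
  set C : ℝ := (4 * Real.sqrt 2) ^ (1 / β : ℝ) with hCdef
  refine ⟨c, C, Real.rpow_pos_of_pos hc0 _, Real.rpow_pos_of_pos (by positivity) _, ?_⟩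
  intro r hr
  constructor
  · -- lower inclusion : combinatorial ball inside intrinsic ball
    intro x hx
    simp only [Set.mem_setOf_eq] at hx
    show AntiTree.rho (gammaSphere γ) o x ≤ r
    have hrle := AT_rho_le hγ0 o x ho
    rcases Nat.eq_zero_or_pos x.1 with hN0 | hN1
    · rw [hN0] at hrle
      simpa using hrle.trans hr
    · have hNle : (x.1 : ℝ) ≤ c * r ^ (1 / β : ℝ) := by
        have h1 : (x.1 : ℝ) ≤ (⌊c * r ^ (2 / (2 - γ))⌋₊ : ℝ) := Nat.cast_le.mpr hx
        have h2 : (⌊c * r ^ (2 / (2 - γ))⌋₊ : ℝ) ≤ c * r ^ (2 / (2 - γ)) :=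
          Nat.floor_le (by positivity)
        rw [hexp] at h1 h2
        linarith
      have hNn : (0:ℝ) ≤ (x.1 : ℝ) := Nat.cast_nonneg _
      have hcβ : c ^ β = β / (2 * Real.sqrt 2) := by
        rw [hcdef, ← Real.rpow_mul hc0.le, one_div_mul_cancel hβne, Real.rpow_one]
      have hrβ : (r ^ (1 / β : ℝ)) ^ β = r := by
        rw [← Real.rpow_mul hr, one_div_mul_cancel hβne, Real.rpow_one]
      have hNβ : ((x.1 : ℝ)) ^ β ≤ β / (2 * Real.sqrt 2) * r := by
        calc ((x.1 : ℝ)) ^ β ≤ (c * r ^ (1 / β : ℝ)) ^ β :=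
              Real.rpow_le_rpow hNn hNle hβpos.le
          _ = c ^ β * (r ^ (1 / β : ℝ)) ^ β :=
              Real.mul_rpow (le_of_lt (Real.rpow_pos_of_pos hc0 _)) (Real.rpow_nonneg hr _)
          _ = β / (2 * Real.sqrt 2) * r := by rw [hcβ, hrβ]
      have hN1' : (1:ℝ) ≤ (x.1 : ℝ) := by exact_mod_cast hN1
      have hA : ((x.1 : ℝ) + 1) ^ β ≤ 2 * ((x.1 : ℝ)) ^ β := by
        calc ((x.1 : ℝ) + 1) ^ β ≤ (2 * (x.1 : ℝ)) ^ β :=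
              Real.rpow_le_rpow (by positivity) (by linarith) hβpos.le
          _ = 2 ^ β * ((x.1:ℝ)) ^ β := Real.mul_rpow (by norm_num) hNn
          _ ≤ 2 * ((x.1:ℝ)) ^ β := by
              have h2b : (2:ℝ) ^ β ≤ 2 := by
                have := Real.rpow_le_rpow_of_exponent_le (by norm_num : (1:ℝ) ≤ 2) hβ1
                rwa [Real.rpow_one] at this
              exact mul_le_mul_of_nonneg_right h2b (Real.rpow_nonneg hNn _)
      have hsum := AT_sum_le hγ0 hγ2 x.1
      rw [← hβdef] at hsum
      rw [← Finset.mul_sum] at hrle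
      have hAB : ((x.1:ℝ) + 1) ^ β ≤ 2 * (β / (2 * Real.sqrt 2) * r) := by linarith
      calc AntiTree.rho (gammaSphere γ) o x
          ≤ Real.sqrt 2 * ∑ j ∈ Finset.range x.1, ((j : ℝ) + 2) ^ (-(γ / 2)) := hrle
        _ ≤ Real.sqrt 2 * (((x.1:ℝ) + 1) ^ β / β) :=
            mul_le_mul_of_nonneg_left hsum hs2.le
        _ ≤ Real.sqrt 2 * ((2 * (β / (2 * Real.sqrt 2) * r)) / β) := by gcongr
        _ = r := by
            field_simp
  · -- upper inclusion : intrinsic ball inside combinatorial ball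
    intro x hx
    simp only [AntiTree.ball, Set.mem_setOf_eq] at hx
    simp only [Set.mem_setOf_eq]
    rcases Nat.eq_zero_or_pos x.1 with hN0 | hN1
    · rw [hN0]
      exact Nat.zero_le _
    · have hge := AT_rho_ge hγ0 o x ho
      have hS2 := AT_sum_ge hγ0 hγ2 x.1 hN1
      rw [← hβdef] at hS2
      have hATG : ATG γ x.1
          = (Real.sqrt 2)⁻¹ * ∑ j ∈ Finset.range x.1, ((j:ℝ) + 3) ^ (-(γ / 2)) := by
        rw [ATG, Finset.mul_sum]
      have hkey : (Real.sqrt 2)⁻¹ * ((x.1:ℝ) ^ β / 4) ≤ r := by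
        calc (Real.sqrt 2)⁻¹ * ((x.1:ℝ) ^ β / 4)
            ≤ (Real.sqrt 2)⁻¹ * ∑ j ∈ Finset.range x.1, ((j:ℝ) + 3) ^ (-(γ / 2)) :=
              mul_le_mul_of_nonneg_left hS2 (by positivity)
          _ = ATG γ x.1 := hATG.symm
          _ ≤ AntiTree.rho (gammaSphere γ) o x := hge
          _ ≤ r := hx
      have hNβr : ((x.1:ℝ)) ^ β ≤ 4 * Real.sqrt 2 * r := by
        have hmul := mul_le_mul_of_nonneg_left hkey
          (by positivity : (0:ℝ) ≤ 4 * Real.sqrt 2)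
        calc ((x.1:ℝ)) ^ β
            = 4 * Real.sqrt 2 * ((Real.sqrt 2)⁻¹ * ((x.1:ℝ) ^ β / 4)) := by
              field_simp
          _ ≤ 4 * Real.sqrt 2 * r := hmul
      have hfin : (x.1 : ℝ) ≤ C * r ^ (1 / β : ℝ) := by
        have h2 : (((x.1:ℝ)) ^ β) ^ (1 / β : ℝ) ≤ (4 * Real.sqrt 2 * r) ^ (1 / β : ℝ) :=
          Real.rpow_le_rpow (Real.rpow_nonneg (Nat.cast_nonneg _) _) hNβr (by positivity)
        rwa [← Real.rpow_mul (Nat.cast_nonneg _), mul_one_div_cancel hβne, Real.rpow_one,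
          Real.mul_rpow (by positivity) hr, ← hCdef] at h2
      rw [hexp]
      exact_mod_cast hfin.trans (Nat.le_ceil _)
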